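/- arXiv:1806.09015 — 5 statements merged into one kernel-verified Lean document; each statement's English description precedes it below -/
import Mathlib

section
/- Let α be an ordinal, let t₀ ≤ α be a limit ordinal whose cofinality is uncountable (cf(t₀) > ω), and let x : [0,α] → ℝ be a function that is continuous at every point of countable character of [0,α], i.e. at every limit ordinal t ≤ α with cf(t) = ω. Then there exists an ordinal γ < t₀ such that x is constant on the open interval (γ, t₀). -/
open Filter Topology

/-- Let `t₀ ≤ α` be a limit ordinal of uncountable cofinality, and let
`x : [0,α] → ℝ` be continuous at every limit ordinal `t ≤ α` of cofinality `ω`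
(i.e. at every point of countable character). Then `x` is constant on some
interval `(γ, t₀)` with `γ < t₀`. -/
theorem stmt4 (α : Ordinal) (t₀ : Set.Iic α) (hlim : Order.IsSuccLimit (t₀ : Ordinal))
    (hcof : Cardinal.aleph0 < Ordinal.cof (t₀ : Ordinal))
    (x : Set.Iic α → ℝ)
    (hx : ∀ t : Set.Iic α, Order.IsSuccLimit (t : Ordinal) →
      Ordinal.cof (t : Ordinal) = Cardinal.aleph0 → ContinuousAt x t) :
    ∃ γ : Ordinal, γ < (t₀ : Ordinal) ∧ ∃ c : ℝ, ∀ s : Set.Iic α,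
      γ < (s : Ordinal) → (s : Ordinal) < (t₀ : Ordinal) → x s = c := by
  classical
  -- Step 1: for every ε > 0 there is γ < t₀ beyond which the oscillation is ≤ ε.
  have osc : ∀ ε : ℝ, 0 < ε → ∃ γ : Ordinal, γ < (t₀ : Ordinal) ∧
      ∀ s s' : Set.Iic α, γ < (s : Ordinal) → (s : Ordinal) < (t₀ : Ordinal) →
        γ < (s' : Ordinal) → (s' : Ordinal) < (t₀ : Ordinal) → |x s - x s'| ≤ ε := by
    intro ε hε
    by_contra hcon
    push_neg at hcon
    have h := hcon
    -- choice function
    set F : Ordinal → Set.Iic α × Set.Iic α := fun γ =>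
      if hγ : γ < (t₀ : Ordinal) then ((h γ hγ).choose, (h γ hγ).choose_spec.choose)
      else (t₀, t₀) with hFdef
    have hF : ∀ γ (hγ : γ < (t₀ : Ordinal)),
        γ < ((F γ).1 : Ordinal) ∧ ((F γ).1 : Ordinal) < (t₀ : Ordinal) ∧
        γ < ((F γ).2 : Ordinal) ∧ ((F γ).2 : Ordinal) < (t₀ : Ordinal) ∧
        ε < |x (F γ).1 - x (F γ).2| := by
      intro γ hγ
      have := (h γ hγ).choose_spec.choose_spec
      simp only [hFdef, dif_pos hγ]
      exact this
    -- recursive sequence of pairs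
    set q : ℕ → Set.Iic α × Set.Iic α := fun n =>
      Nat.rec (F 0) (fun _ p => F (max ((p.1 : Ordinal)) ((p.2 : Ordinal)))) n with hqdef
    set c : ℕ → Ordinal := fun n => max (((q n).1 : Ordinal)) (((q n).2 : Ordinal)) with hcdef
    have hq0 : q 0 = F 0 := rfl
    have hqs : ∀ n, q (n + 1) = F (c n) := fun n => rfl
    have hc : ∀ n, c n < (t₀ : Ordinal) := by
      intro n
      induction n with
      | zero =>
        have := hF 0 hlim.pos
        rw [hq0] at *
        exact max_lt this.2.1 this.2.2.2.1
      | succ n ih =>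
        have := hF (c n) ih
        rw [hcdef]
        simp only [hqs n]
        exact max_lt this.2.1 this.2.2.2.1
    have hstep : ∀ n, c n < ((q (n + 1)).1 : Ordinal) ∧ c n < ((q (n + 1)).2 : Ordinal) := by
      intro n
      have := hF (c n) (hc n)
      rw [hqs n]
      exact ⟨this.1, this.2.2.1⟩
    have hqε : ∀ n, ε < |x (q n).1 - x (q n).2| := by
      intro n
      cases n with
      | zero => rw [hq0]; exact (hF 0 hlim.pos).2.2.2.2
      | succ n => rw [hqs n]; exact (hF (c n) (hc n)).2.2.2.2
    have hcmono : StrictMono c := by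
      apply strictMono_nat_of_lt_succ
      intro n
      exact lt_of_lt_of_le (hstep n).1 (le_max_left _ _)
    -- the limit point
    set t : Ordinal := ⨆ n, c n with htdef
    have hbdd : BddAbove (Set.range c) := Ordinal.bddAbove_range c
    have hct : ∀ n, c n < t := fun n =>
      lt_of_lt_of_le (hcmono n.lt_succ_self) (le_ciSup hbdd (n + 1))
    have haux : ∀ a, a < t ↔ ∃ n, a < c n := fun a => lt_ciSup_iff hbdd
    have htt₀ : t < (t₀ : Ordinal) := by
      apply Ordinal.iSup_lt_ord_lift _ hc
      rwa [Cardinal.mk_nat, Cardinal.lift_aleph0]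
    have ht0 : t ≠ 0 := by
      intro h0
      exact absurd (hct 0) (by simp [h0])
    have htlim : Order.IsSuccLimit t := by
      refine Ordinal.isSuccLimit_iff.2 ⟨ht0, Order.isSuccPrelimit_of_succ_lt fun a ha => ?_⟩
      obtain ⟨n, hn⟩ := (haux a).1 ha
      exact lt_of_le_of_lt (Order.succ_le_of_lt hn) (hct n)
    have htcof : Ordinal.cof t = Cardinal.aleph0 := by
      refine le_antisymm ?_ (Ordinal.aleph0_le_cof.2 htlim)
      have := Ordinal.cof_iSup_le_lift hct
      rwa [Cardinal.mk_nat, Cardinal.lift_aleph0] at this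
    have htα : t ≤ α := le_of_lt (lt_of_lt_of_le htt₀ t₀.2)
    set T : Set.Iic α := ⟨t, htα⟩ with hTdef
    have cont : ContinuousAt x T := hx T htlim htcof
    -- both coordinate sequences tend to t
    have htends : ∀ g : ℕ → Set.Iic α, (∀ n, c n < (g (n+1) : Ordinal)) →
        (∀ n, (g n : Ordinal) ≤ c n) → Tendsto g atTop (𝓝 T) := by
      intro g hg1 hg2
      rw [tendsto_subtype_rng]
      rw [(SuccOrder.hasBasis_nhds_Ioc_of_exists_lt ⟨0, pos_iff_ne_zero.2 ht0⟩).tendsto_right_iff]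
      intro γ hγ
      obtain ⟨m, hm⟩ := (haux γ).1 hγ
      filter_upwards [eventually_ge_atTop (m + 1)] with n hn
      obtain ⟨k, rfl⟩ := Nat.exists_eq_add_of_le hn
      have hidx : m + 1 + k = (m + k) + 1 := by omega
      rw [hidx]
      constructor
      · calc γ < c m := hm
          _ ≤ c (m + k) := hcmono.monotone (Nat.le_add_right m k)
          _ < (g (m + k + 1) : Ordinal) := hg1 (m + k)
      · exact le_of_lt (lt_of_le_of_lt (hg2 (m + k + 1)) (hct (m + k + 1)))
    have hu : Tendsto (fun n => (q n).1) atTop (𝓝 T) :=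
      htends (fun n => (q n).1) (fun n => (hstep n).1) (fun n => le_max_left _ _)
    have hv : Tendsto (fun n => (q n).2) atTop (𝓝 T) :=
      htends (fun n => (q n).2) (fun n => (hstep n).2) (fun n => le_max_right _ _)
    have hxu : Tendsto (fun n => x (q n).1) atTop (𝓝 (x T)) := cont.tendsto.comp hu
    have hxv : Tendsto (fun n => x (q n).2) atTop (𝓝 (x T)) := cont.tendsto.comp hv
    have hdiff : Tendsto (fun n => |x (q n).1 - x (q n).2|) atTop (𝓝 0) := by
      have := (hxu.sub hxv).abs
      simpa using this
    have hev : ∀ᶠ n in atTop, |x (q n).1 - x (q n).2| < ε :=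
      hdiff.eventually_lt_const hε
    obtain ⟨n, hn⟩ := hev.exists
    exact absurd (hqε n) (not_lt.2 hn.le)
  -- Step 2: combine γ's for ε = 1/(n+1).
  choose γf hγf1 hγf2 using fun n : ℕ => osc (1 / (n + 1)) (by positivity)
  set γ : Ordinal := ⨆ n, γf n with hγdef
  have hγ : γ < (t₀ : Ordinal) := by
    apply Ordinal.iSup_lt_ord_lift _ hγf1
    rwa [Cardinal.mk_nat, Cardinal.lift_aleph0]
  have hle : ∀ n, γf n ≤ γ := fun n => le_ciSup (Ordinal.bddAbove_range γf) n
  have hsucc : γ + 1 < (t₀ : Ordinal) := by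
    have := hlim.succ_lt hγ
    rwa [← Ordinal.add_one_eq_succ] at this
  set pt : Set.Iic α := ⟨γ + 1, le_of_lt (lt_of_lt_of_le hsucc t₀.2)⟩ with hptdef
  have hpt1 : γ < (pt : Ordinal) := by
    show γ < γ + 1
    rw [Ordinal.add_one_eq_succ]
    exact Order.lt_succ γ
  refine ⟨γ, hγ, x pt, fun s hs1 hs2 => ?_⟩
  have key : ∀ n : ℕ, |x s - x pt| ≤ 1 / (n + 1) := fun n =>
    hγf2 n s pt (lt_of_le_of_lt (hle n) hs1) hs2 (lt_of_le_of_lt (hle n) hpt1) hsucc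
  have h0 : |x s - x pt| ≤ 0 :=
    ge_of_tendsto' tendsto_one_div_add_atTop_nhds_zero_nat key
  have := abs_nonpos_iff.1 h0
  linarith [this, abs_nonneg (x s - x pt), sub_eq_zero.1 this]
end

section
/- Let α be an ordinal and let x : [0,α] → ℝ be a function that is continuous at every point of countable character of [0,α], i.e. at every limit ordinal t ≤ α with cf(t) = ω. Then the set D(x) of points of [0,α] at which x is discontinuous is at most countable. -/
open Filter Set Topology
lemma aux_cont_nonlimit {α : Ordinal} (x : Set.Iic α → ℝ) (t : Set.Iic α)
    (h : ¬ Order.IsSuccLimit (t : Ordinal)) : ContinuousAt x t := by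
  have hpure : 𝓝 (t : Ordinal) = pure (t : Ordinal) := Ordinal.nhds_eq_pure.2 h
  have hpre : (Subtype.val ⁻¹' {(t : Ordinal)} : Set (Set.Iic α)) = {t} := by
    ext u; simp [Subtype.ext_iff]
  have h1 : 𝓝 t = pure t := by
    rw [nhds_subtype, hpure, ← principal_singleton, comap_principal, hpre,
      principal_singleton]
  rw [ContinuousAt, h1]
  exact tendsto_pure_nhds x t

lemma aux_key {α : Ordinal} (x : Set.Iic α → ℝ) (t : Set.Iic α)
    (hlim : Order.IsSuccLimit (t : Ordinal)) :
    ContinuousAt x t ↔ ∀ ε > 0, ∃ s < (t : Ordinal), ∀ u : Set.Iic α,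
      s < (u : Ordinal) → (u : Ordinal) ≤ (t : Ordinal) → dist (x u) (x t) < ε := by
  have hb : (𝓝 (t : Ordinal)).HasBasis (· < (t : Ordinal)) (Set.Ioc · (t : Ordinal)) :=
    SuccOrder.hasBasis_nhds_Ioc_of_exists_lt ⟨0, hlim.pos⟩
  have hb2 := hb.comap (Subtype.val : Set.Iic α → Ordinal)
  rw [ContinuousAt, nhds_subtype, Metric.tendsto_nhds]
  refine forall₂_congr fun ε hε => ?_
  rw [hb2.eventually_iff]
  exact exists_congr fun s => and_congr_right fun _ =>
    ⟨fun h u h1 h2 => h ⟨h1, h2⟩, fun h u hu => h u hu.1 hu.2⟩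

/-- If `x : [0,α] → ℝ` is continuous at every limit ordinal `t ≤ α` of cofinality `ω`
(i.e. at every point of countable character), then the set of points of discontinuity
of `x` is at most countable. -/
theorem stmt5 (α : Ordinal) (x : Set.Iic α → ℝ)
    (hx : ∀ t : Set.Iic α, Order.IsSuccLimit (t : Ordinal) →
      Ordinal.cof (t : Ordinal) = Cardinal.aleph0 → ContinuousAt x t) :
    {t : Set.Iic α | ¬ ContinuousAt x t}.Countable := by
  set E : ℕ → Set (Set.Iic α) := fun n =>
    {t : Set.Iic α | Order.IsSuccLimit (t : Ordinal) ∧ ∀ s < (t : Ordinal),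
      ∃ u : Set.Iic α, s < (u : Ordinal) ∧ (u : Ordinal) ≤ (t : Ordinal) ∧
        ((n : ℝ) + 1)⁻¹ ≤ dist (x u) (x t)} with hE
  have hsub : {t : Set.Iic α | ¬ ContinuousAt x t} ⊆ ⋃ n, E n := by
    intro t ht
    simp only [Set.mem_setOf_eq] at ht
    by_cases hlim : Order.IsSuccLimit (t : Ordinal)
    · rw [aux_key x t hlim] at ht
      push_neg at ht
      obtain ⟨ε, hε, hεt⟩ := ht
      obtain ⟨n, hn⟩ := exists_nat_one_div_lt hε
      refine Set.mem_iUnion.2 ⟨n, hlim, fun s hs => ?_⟩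
      obtain ⟨u, hu1, hu2, hu3⟩ := hεt s hs
      rw [one_div] at hn
      exact ⟨u, hu1, hu2, le_trans hn.le hu3⟩
    · exact absurd (aux_cont_nonlimit x t hlim) ht
  have hfin : ∀ n, (E n).Finite := by
    intro n
    by_contra hinf
    replace hinf : (E n).Infinite := hinf
    let F0 := hinf.natEmbedding
    have hPWO : (Set.univ : Set (Set.Iic α)).IsPWO :=
      (Set.isWF_univ_iff.2 ⟨wellFounded_lt⟩).isPWO
    obtain ⟨g, hg⟩ := hPWO.exists_monotone_subseq (f := fun k => (F0 k : Set.Iic α))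
      (fun _ => Set.mem_univ _)
    set f : ℕ → Set.Iic α := fun k => (F0 (g k) : Set.Iic α) with hf
    have hfE : ∀ k, f k ∈ E n := fun k => (F0 (g k)).2
    have hmono : Monotone f := fun a b h => hg h
    have hinj : Function.Injective f := fun a b hab =>
      g.injective (F0.injective (Subtype.ext hab))
    have hsm : StrictMono f := hmono.strictMono_of_injective hinj
    set o' := ⨆ k, ((f k : Ordinal)) with ho'
    have hle : o' ≤ α := Ordinal.iSup_le fun k => (f k).2
    have hflt : ∀ k, ((f k : Ordinal)) < o' := fun k =>
      lt_of_lt_of_le (show ((f k : Ordinal)) < ((f (k+1) : Ordinal)) from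
        hsm (Nat.lt_succ_self k)) (Ordinal.le_iSup (fun k => ((f k : Ordinal))) (k+1))
    have hlim : Order.IsSuccLimit o' := by
      rw [Ordinal.isSuccLimit_iff, Order.isSuccPrelimit_iff_succ_lt]
      constructor
      · rintro h0
        exact (zero_le : (0 : Ordinal) ≤ (f 0 : Ordinal)).not_gt (h0 ▸ hflt 0)
      · intro a ha
        obtain ⟨k, hk⟩ := Ordinal.lt_iSup_iff.1 ha
        exact lt_of_le_of_lt (Order.succ_le_of_lt hk) (hflt k)
    have hcof : Ordinal.cof o' = Cardinal.aleph0 := by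
      apply le_antisymm
      · have := Ordinal.cof_iSup_le_lift hflt
        simpa using this
      · exact Ordinal.aleph0_le_cof.2 hlim
    have hcont := hx ⟨o', hle⟩ hlim hcof
    rw [aux_key x ⟨o', hle⟩ hlim] at hcont
    obtain ⟨s, hs, hsmall⟩ := hcont (((n : ℝ) + 1)⁻¹ / 2) (by positivity)
    obtain ⟨k, hk⟩ := Ordinal.lt_iSup_iff.1 (show s < o' from hs)
    obtain ⟨u, hu1, hu2, hu3⟩ := (hfE k).2 s hk
    have hfk_le : ((f k : Ordinal)) ≤ o' := Ordinal.le_iSup (fun k => ((f k : Ordinal))) k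
    have d1 := hsmall u hu1 (le_trans hu2 hfk_le)
    have d2 := hsmall (f k) hk hfk_le
    have h5 := dist_triangle (x u) (x ⟨o', hle⟩) (x (f k))
    have h6 : dist (x ⟨o', hle⟩) (x (f k)) = dist (x (f k)) (x ⟨o', hle⟩) :=
      dist_comm _ _
    have h4 : dist (x u) (x (f k)) < ((n : ℝ) + 1)⁻¹ := by linarith
    exact absurd hu3 (not_le.2 h4)
  exact Set.Countable.mono hsub (Set.countable_iUnion fun n => (hfin n).countable)
end

section
/- Let τ ≥ ω₁ be a regular initial ordinal and let σ ≤ τ be an initial ordinal. A function x : [0, τ·σ] → ℝ belongs to M_{τσ} if and only if for every subset S of [0, τ·σ] of cardinality strictly less than |τ| there exists a continuous function y : [0, τ·σ] → ℝ with y(t) = x(t) for all t ∈ S. (Equivalently: x ∈ M_{τσ} iff every λ-neighborhood of x in ℝ^[0,τ·σ], for every initial ordinal λ < τ, meets C_p([0, τ·σ]).) -/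
/-- A regular (initial) ordinal: an ordinal equal to its own cofinality. -/
def IsRegularOrdinal (o : Ordinal) : Prop := o.cof.ord = o

/-- `M_{τσ}`: the set of functions `x : [0, τ·σ] → ℝ` that are continuous at every
point `t` with `cf(t) < τ`. -/
def MSet (τ σ : Ordinal) : Set (Set.Iic (τ * σ) → ℝ) :=
  {x | ∀ t : Set.Iic (τ * σ), ((t : Ordinal).cof.ord < τ) → ContinuousAt x t}

namespace Stmt6Helper

open Ordinal Set Filter

variable {A : Ordinal}

/-- Half-open intervals `(a, t]` are neighborhoods of `t` in `[0, A]`. -/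
lemma mem_nhds_Ioc (t : Set.Iic A) {a : Ordinal} (ha : a < t.1) :
    {u : Set.Iic A | a < u.1 ∧ u.1 ≤ t.1} ∈ nhds t := by
  have hset : {u : Set.Iic A | a < u.1 ∧ u.1 ≤ t.1}
      = (Subtype.val : Set.Iic A → Ordinal) ⁻¹' (Set.Ioo a (t.1 + 1)) := by
    ext u
    simp only [Set.mem_setOf_eq, Set.mem_preimage, Set.mem_Ioo,
      Ordinal.add_one_eq_succ, Order.lt_succ_iff]
  rw [hset]
  refine (isOpen_Ioo.preimage continuous_subtype_val).mem_nhds ?_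
  exact ⟨ha, by rw [Ordinal.add_one_eq_succ]; exact Order.lt_succ _⟩

lemma isolated (t : Set.Iic A) (h : ¬ Order.IsSuccLimit t.1) : {t} ∈ nhds t := by
  rcases Ordinal.zero_or_succ_or_isSuccLimit t.1 with h0 | ⟨s, hs⟩ | hl
  · have hset : ({t} : Set (Set.Iic A))
        = (Subtype.val : Set.Iic A → Ordinal) ⁻¹' (Set.Iio 1) := by
      ext u
      simp only [Set.mem_singleton_iff, Set.mem_preimage, Set.mem_Iio,
        Ordinal.lt_one_iff_zero, Subtype.ext_iff, h0]
    rw [hset]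
    refine (isOpen_Iio.preimage continuous_subtype_val).mem_nhds ?_
    simp [h0]
  · have hmem := mem_nhds_Ioc t (a := s) (by rw [← hs]; exact Order.lt_succ s)
    have hset : {u : Set.Iic A | s < u.1 ∧ u.1 ≤ t.1} = {t} := by
      ext u
      constructor
      · rintro ⟨h1, h2⟩
        exact Subtype.ext (le_antisymm h2 (by rw [← hs]; exact Order.succ_le_of_lt h1))
      · rintro rfl
        exact ⟨by rw [← hs]; exact Order.lt_succ s, le_rfl⟩
    rwa [hset] at hmem
  · exact absurd hl h

lemma continuousAt_of_not_limit {f : Set.Iic A → ℝ} {t : Set.Iic A} (h : ¬ Order.IsSuccLimit t.1) :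
    ContinuousAt f t :=
  continuousAt_const.congr (Filter.eventuallyEq_of_mem (isolated t h)
    (fun u hu => by rw [Set.mem_singleton_iff.1 hu]))

lemma exists_ioc_of_mem_nhds {t : Set.Iic A} (ht : t.1 ≠ 0) {V : Set (Set.Iic A)}
    (hV : V ∈ nhds t) : ∃ a < t.1, ∀ u : Set.Iic A, a < u.1 → u.1 ≤ t.1 → u ∈ V := by
  rw [nhds_subtype] at hV
  obtain ⟨V', hV', hsub⟩ := Filter.mem_comap.1 hV
  obtain ⟨a, ha, hIoc⟩ := exists_Ioc_subset_of_mem_nhds hV' ⟨0, pos_iff_ne_zero.2 ht⟩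
  exact ⟨a, ha, fun u h1 h2 => hsub (hIoc ⟨h1, h2⟩)⟩

lemma continuousAt_iff_Ioc {t : Set.Iic A} (ht : Order.IsSuccLimit t.1) (f : Set.Iic A → ℝ) :
    ContinuousAt f t ↔ ∀ ε : ℝ, 0 < ε → ∃ a < t.1, ∀ u : Set.Iic A, a < u.1 → u.1 ≤ t.1 →
      dist (f u) (f t) < ε := by
  constructor
  · intro hc ε hε
    have hb : f ⁻¹' Metric.ball (f t) ε ∈ nhds t := hc (Metric.ball_mem_nhds _ hε)
    obtain ⟨a, ha, h2⟩ := exists_ioc_of_mem_nhds ht.pos.ne' hb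
    exact ⟨a, ha, fun u h1u h2u => Metric.mem_ball.1 (h2 u h1u h2u)⟩
  · intro h
    rw [ContinuousAt, Metric.tendsto_nhds]
    intro ε hε
    obtain ⟨a, ha, h2⟩ := h ε hε
    filter_upwards [mem_nhds_Ioc t ha] with u hu
    exact h2 u hu.1 hu.2

lemma sSup_lt_of_small {p : Ordinal} {B : Set Ordinal} (hB : B ⊆ Set.Iio p) (hp : 0 < p)
    (hmk : Cardinal.mk B < Cardinal.lift.{1, 0} p.cof) : sSup B < p := by
  rcases B.eq_empty_or_nonempty with rfl | hne
  · rw [csSup_empty]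
    exact Ordinal.bot_eq_zero.symm ▸ hp
  · obtain ⟨κ, hκlt, hκ⟩ := Cardinal.lt_lift_iff.1 hmk
    have hlifteq : Cardinal.lift.{1, 0} (Cardinal.mk κ.out)
        = Cardinal.lift.{0, 1} (Cardinal.mk ↥B) := by
      rw [Cardinal.mk_out, Cardinal.lift_id', hκ]
    obtain ⟨e⟩ := Cardinal.lift_mk_eq'.1 hlifteq
    have hsup : iSup (fun i => ((e i : ↥B) : Ordinal)) < p := by
      apply Ordinal.iSup_lt_of_lt_cof
      · rwa [Cardinal.mk_out]
      · exact fun i => hB (e i).2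
    refine lt_of_le_of_lt (csSup_le hne fun b hb => ?_) hsup
    have hb' : b = ((e (e.symm ⟨b, hb⟩) : ↥B) : Ordinal) := by rw [Equiv.apply_symm_apply]
    rw [hb']
    exact Ordinal.le_iSup _ _

lemma dvd_of_cof_ge {τ p : Ordinal} (hω : Ordinal.omega0 ≤ τ) (hcof : τ ≤ p.cof.ord) :
    τ ∣ p := by
  rw [Ordinal.dvd_iff_mod_eq_zero]
  by_contra hδ
  have hm := Ordinal.div_add_mod p τ
  have hc : p.cof = (p % τ).cof := by
    conv_lhs => rw [← hm]
    exact Ordinal.cof_add _ hδ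
  have h1 : p.cof.ord ≤ p % τ := by rw [hc]; exact Ordinal.ord_cof_le _
  have h2 : p % τ < τ := Ordinal.mod_lt p (Ordinal.omega0_pos.trans_le hω).ne'
  exact absurd (hcof.trans h1) (not_le.2 h2)

lemma block {τ σ p : Ordinal} (hω : Ordinal.omega0 ≤ τ) (hστ : σ ≤ τ)
    (hcof : τ ≤ p.cof.ord) (hlt : p < τ * σ) :
    ∃ a < p, ∀ p', τ ≤ p'.cof.ord → p' ≤ a ∨ p ≤ p' := by
  have hτ0 : (0 : Ordinal) < τ := Ordinal.omega0_pos.trans_le hω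
  obtain ⟨γ, rfl⟩ := dvd_of_cof_ge hω hcof
  rcases Ordinal.zero_or_succ_or_isSuccLimit γ with rfl | ⟨β, rfl⟩ | hγ
  · exfalso
    rw [mul_zero, Ordinal.cof_zero, Cardinal.ord_zero] at hcof
    exact absurd hcof (not_le.2 hτ0)
  · refine ⟨τ * β, (mul_lt_mul_iff_right₀ hτ0).2 (Order.lt_succ β), ?_⟩
    intro p' hp'
    obtain ⟨γ', rfl⟩ := dvd_of_cof_ge hω hp'
    rcases le_or_gt (τ * γ') (τ * β) with h | h
    · exact Or.inl h
    · right
      have hβγ : β < γ' := (mul_lt_mul_iff_right₀ hτ0).1 h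
      exact (mul_le_mul_iff_right₀ hτ0).2 (Order.succ_le_of_lt hβγ)
  · exfalso
    have h1 : (τ * γ).cof = γ.cof := Ordinal.cof_map_of_isNormal (Ordinal.isNormal_mul_right hτ0) hγ
    have h2 : γ < σ := (mul_lt_mul_iff_right₀ hτ0).1 hlt
    have h3 : (τ * γ).cof.ord ≤ γ := by rw [h1]; exact Ordinal.ord_cof_le γ
    exact absurd (hcof.trans h3) (not_le.2 (h2.trans_le hστ))

/-- The set of "shadow" indices covering `u`. -/
def auxQ (D : Set Ordinal) (q : Ordinal → Ordinal) (u : Ordinal) : Set Ordinal :=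
  {p | p ∈ D ∧ q p < u ∧ u ≤ p}

lemma mem_auxQ {D : Set Ordinal} {q : Ordinal → Ordinal} {u p : Ordinal} :
    p ∈ auxQ D q u ↔ p ∈ D ∧ q p < u ∧ u ≤ p := Iff.rfl

open scoped Classical in
/-- The modified function, constant on shadows. -/
noncomputable def auxY (x : Set.Iic A → ℝ) (D : Set Ordinal)
    (hD : ∀ p ∈ D, p ≤ A) (q : Ordinal → Ordinal) : Set.Iic A → ℝ := fun u =>
  if A ∈ D ∧ q A < u.1 then x ⟨A, Set.self_mem_Iic⟩
  else if h : (auxQ D q u.1).Nonempty then x ⟨sInf (auxQ D q u.1), hD _ (csInf_mem h).1⟩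
  else x u

lemma auxY_top (x : Set.Iic A → ℝ) (D : Set Ordinal) (hD : ∀ p ∈ D, p ≤ A)
    (q : Ordinal → Ordinal) (u : Set.Iic A) (h : A ∈ D ∧ q A < u.1) :
    auxY x D hD q u = x ⟨A, Set.self_mem_Iic⟩ := by
  simp only [auxY]
  rw [if_pos h]

lemma auxY_shadow (x : Set.Iic A → ℝ) (D : Set Ordinal) (hD : ∀ p ∈ D, p ≤ A)
    (q : Ordinal → Ordinal) (u : Set.Iic A) (hneg : ¬(A ∈ D ∧ q A < u.1)) {p : Ordinal}
    (hp : p ∈ auxQ D q u.1) (huni : ∀ p' ∈ auxQ D q u.1, p' = p) :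
    auxY x D hD q u = x ⟨p, hD p hp.1⟩ := by
  have hne : (auxQ D q u.1).Nonempty := ⟨p, hp⟩
  have hinf : sInf (auxQ D q u.1) = p := huni _ (csInf_mem hne)
  simp only [auxY]
  rw [if_neg hneg, dif_pos hne]
  exact congrArg x (Subtype.ext hinf)

lemma auxY_none (x : Set.Iic A → ℝ) (D : Set Ordinal) (hD : ∀ p ∈ D, p ≤ A)
    (q : Ordinal → Ordinal) (u : Set.Iic A) (hneg : ¬(A ∈ D ∧ q A < u.1))
    (h : ¬(auxQ D q u.1).Nonempty) :
    auxY x D hD q u = x u := by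
  simp only [auxY]
  rw [if_neg hneg, dif_neg h]

end Stmt6Helper

open Stmt6Helper Ordinal Set Filter in
/-- Let `τ ≥ ω₁` be a regular initial ordinal and `σ ≤ τ` an initial ordinal.
Then `x : [0, τ·σ] → ℝ` belongs to `M_{τσ}` iff for every subset `S` of `[0, τ·σ]`
of cardinality `< |τ|` there is a continuous function `y : [0, τ·σ] → ℝ` agreeing
with `x` on `S` (i.e. every `λ`-neighborhood of `x`, `λ < τ`, meets `C_p([0, τ·σ])`). -/
theorem stmt6 (τ σ : Ordinal) (hreg : IsRegularOrdinal τ) (hτinit : τ.IsInitial)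
    (hτ : (Cardinal.aleph 1).ord ≤ τ) (hσ : σ.IsInitial) (hστ : σ ≤ τ)
    (x : Set.Iic (τ * σ) → ℝ) :
    x ∈ MSet τ σ ↔
      ∀ S : Set (Set.Iic (τ * σ)), Cardinal.mk ↥S < Cardinal.lift.{1, 0} τ.card →
        ∃ y : Set.Iic (τ * σ) → ℝ, Continuous y ∧ ∀ t ∈ S, y t = x t := by
  have hω : Ordinal.omega0 ≤ τ := by
    calc Ordinal.omega0 = (Cardinal.aleph0).ord := Cardinal.ord_aleph0.symm
    _ ≤ (Cardinal.aleph 1).ord := Cardinal.ord_le_ord.2 (Cardinal.aleph0_le_aleph 1)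
    _ ≤ τ := hτ
  have hτ0 : (0 : Ordinal) < τ := Ordinal.omega0_pos.trans_le hω
  constructor
  · -- hard direction: x ∈ M → approximation on small sets
    intro hx S hS
    set D : Set Ordinal := {p | p ≤ (τ * σ) ∧ τ ≤ p.cof.ord} with hDdef
    have hD : ∀ p ∈ D, p ≤ (τ * σ) := fun p hp => hp.1
    have hD0 : ∀ p ∈ D, 0 < p := by
      intro p hp
      rcases eq_zero_or_pos p with rfl | h
      · exfalso
        have := hp.2
        rw [Ordinal.cof_zero, Cardinal.ord_zero] at this
        exact absurd this (not_le.2 hτ0)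
      · exact h
    set Sv : Set Ordinal := Subtype.val '' S with hSvdef
    have hSv : Cardinal.mk Sv < Cardinal.lift.{1, 0} τ.card :=
      lt_of_le_of_lt Cardinal.mk_image_le hS
    have hbase_bdd : ∀ p : Ordinal, BddAbove (Sv ∩ Set.Iio p) :=
      fun p => ⟨p, fun b hb => hb.2.le⟩
    have hblock : ∀ p ∈ D, p ≠ (τ * σ) → ∃ a < p, ∀ p' ∈ D, p' ≤ a ∨ p ≤ p' := by
      intro p hp hne
      obtain ⟨a, ha, hpr⟩ := block hω hστ hp.2 (lt_of_le_of_ne hp.1 hne)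
      exact ⟨a, ha, fun p' hp' => hpr p' hp'.2⟩
    have H : ∀ p : Ordinal, ∃ a : Ordinal, (p ∈ D → a < p) ∧
        (p ∈ D → p ≠ (τ * σ) → ∀ p' ∈ D, p' ≤ a ∨ p ≤ p') := by
      intro p
      by_cases hp : p ∈ D ∧ p ≠ (τ * σ)
      · obtain ⟨a, ha, hpr⟩ := hblock p hp.1 hp.2
        exact ⟨a, fun _ => ha, fun _ _ => hpr⟩
      · exact ⟨0, fun hpD => hD0 p hpD, fun hpD hne => absurd ⟨hpD, hne⟩ hp⟩
    choose aF haF1 haF2 using H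
    set q : Ordinal → Ordinal := fun p => max (sSup (Sv ∩ Set.Iio p)) (aF p) with hqdef
    have hq_S : ∀ p : Ordinal, ∀ s ∈ Sv, s < p → s ≤ q p := by
      intro p s hs hlt
      exact le_max_of_le_left (le_csSup (hbase_bdd p) ⟨hs, hlt⟩)
    have hq_lt : ∀ p ∈ D, q p < p := by
      intro p hp
      apply max_lt
      · apply sSup_lt_of_small inter_subset_right (hD0 p hp)
        refine lt_of_le_of_lt (Cardinal.mk_le_mk_of_subset inter_subset_left)
          (lt_of_lt_of_le hSv (Cardinal.lift_le.2 ?_))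
        have := Ordinal.card_le_card hp.2
        rwa [Cardinal.card_ord] at this
      · exact haF1 p hp
    have hq_sep : ∀ p ∈ D, p ≠ (τ * σ) → ∀ p' ∈ D, p' ≤ q p ∨ p ≤ p' := by
      intro p hp hne p' hp'
      rcases haF2 p hp hne p' hp' with h | h
      · exact Or.inl (h.trans (le_max_right _ _))
      · exact Or.inr h
    -- uniqueness of non-top shadows
    have huni : ∀ (u : Set.Iic (τ * σ)), ¬((τ * σ) ∈ D ∧ q (τ * σ) < u.1) →
        ∀ p₁ ∈ auxQ D q u.1, ∀ p₂ ∈ auxQ D q u.1, p₁ = p₂ := by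
      intro u hneg p₁ h₁ p₂ h₂
      have hne1 : p₁ ≠ (τ * σ) := fun he => hneg ⟨he ▸ h₁.1, he ▸ h₁.2.1⟩
      have hne2 : p₂ ≠ (τ * σ) := fun he => hneg ⟨he ▸ h₂.1, he ▸ h₂.2.1⟩
      by_contra hne
      rcases lt_or_gt_of_ne hne with hlt | hlt
      · rcases hq_sep p₂ h₂.1 hne2 p₁ h₁.1 with h | h
        · exact absurd (h₁.2.2.trans h) (not_le.2 h₂.2.1)
        · exact absurd h (not_le.2 hlt)
      · rcases hq_sep p₁ h₁.1 hne1 p₂ h₂.1 with h | h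
        · exact absurd (h₂.2.2.trans h) (not_le.2 h₁.2.1)
        · exact absurd h (not_le.2 hlt)
    refine ⟨auxY x D hD q, ?_, ?_⟩
    · -- continuity of auxY
      rw [continuous_iff_continuousAt]
      intro t
      by_cases hlim : Order.IsSuccLimit t.1
      · by_cases h1 : (τ * σ) ∈ D ∧ q (τ * σ) < t.1
        · refine (continuousAt_const (y := x ⟨τ * σ, Set.self_mem_Iic⟩)).congr
            (Filter.eventuallyEq_of_mem (mem_nhds_Ioc t h1.2) ?_)
          intro u hu
          exact (auxY_top x D hD q u ⟨h1.1, hu.1⟩).symm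
        · by_cases h2 : (auxQ D q t.1).Nonempty
          · obtain ⟨p, hp⟩ := h2
            refine (continuousAt_const (y := x ⟨p, hD p hp.1⟩)).congr
              (Filter.eventuallyEq_of_mem (mem_nhds_Ioc t hp.2.1) ?_)
            intro u hu
            have hnegu : ¬((τ * σ) ∈ D ∧ q (τ * σ) < u.1) :=
              fun hc => h1 ⟨hc.1, lt_of_lt_of_le hc.2 hu.2⟩
            have hpu : p ∈ auxQ D q u.1 := ⟨hp.1, hu.1, hu.2.trans hp.2.2⟩
            exact (auxY_shadow x D hD q u hnegu hpu
              (fun p' hp' => huni u hnegu p' hp' p hpu)).symm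
          · -- x is continuous at t
            have htD : t.1 ∉ D := fun h => h2 ⟨t.1, h, hq_lt t.1 h, le_rfl⟩
            have hcof : (t.1).cof.ord < τ := by
              by_contra hcontra
              exact htD ⟨t.2, not_lt.1 hcontra⟩
            have hxc : ContinuousAt x t := hx t hcof
            rw [continuousAt_iff_Ioc hlim]
            intro ε hε
            obtain ⟨a, ha, hta⟩ := (continuousAt_iff_Ioc hlim x).1 hxc ε hε
            have hnegt : ¬((τ * σ) ∈ D ∧ q (τ * σ) < t.1) := fun hc => h2 ⟨(τ * σ), hc.1, hc.2, t.2⟩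
            have hyt : auxY x D hD q t = x t := auxY_none x D hD q t hnegt h2
            refine ⟨a, ha, fun u h1u h2u => ?_⟩
            rw [hyt]
            by_cases b1 : (τ * σ) ∈ D ∧ q (τ * σ) < u.1
            · exact absurd (⟨(τ * σ), b1.1, b1.2.trans_le h2u, t.2⟩ :
                (auxQ D q t.1).Nonempty) h2
            · by_cases b2 : (auxQ D q u.1).Nonempty
              · obtain ⟨p, hp⟩ := b2
                rw [auxY_shadow x D hD q u b1 hp
                  (fun p' hp' => huni u b1 p' hp' p hp)]
                have hpt : p < t.1 := by
                  by_contra hc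
                  exact h2 ⟨p, hp.1, lt_of_lt_of_le hp.2.1 h2u, not_lt.1 hc⟩
                exact hta ⟨p, hD p hp.1⟩ (lt_of_lt_of_le h1u hp.2.2) hpt.le
              · rw [auxY_none x D hD q u b1 b2]
                exact hta u h1u h2u
      · exact continuousAt_of_not_limit hlim
    · -- agreement on S
      intro s hs
      by_cases b1 : (τ * σ) ∈ D ∧ q (τ * σ) < s.1
      · have hsv : s.1 ∈ Sv := ⟨s, hs, rfl⟩
        have hsA : s.1 = (τ * σ) := by
          by_contra hne
          exact absurd (hq_S (τ * σ) s.1 hsv (lt_of_le_of_ne s.2 hne)) (not_le.2 b1.2)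
        rw [auxY_top x D hD q s b1]
        exact congrArg x (Subtype.ext hsA.symm)
      · by_cases b2 : (auxQ D q s.1).Nonempty
        · obtain ⟨p, hp⟩ := b2
          rw [auxY_shadow x D hD q s b1 hp (fun p' hp' => huni s b1 p' hp' p hp)]
          have hsp : s.1 = p := by
            by_contra hne
            exact absurd (hq_S p s.1 ⟨s, hs, rfl⟩ (lt_of_le_of_ne hp.2.2 hne))
              (not_le.2 hp.2.1)
          exact congrArg x (Subtype.ext hsp.symm)
        · exact auxY_none x D hD q s b1 b2
  · -- easy direction
    intro h t hcof
    by_cases hlim : Order.IsSuccLimit (t : Ordinal)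
    · by_contra hc
      rw [continuousAt_iff_Ioc hlim] at hc
      push_neg at hc
      obtain ⟨ε, hε, hw⟩ := hc
      obtain ⟨f, hf⟩ := Ordinal.exists_fundamental_sequence (t : Ordinal)
      have hwit : ∀ b : Set.Iio ((t : Ordinal)).cof.ord, ∃ u : Set.Iic (τ * σ),
          f b.1 b.2 < u.1 ∧ u.1 ≤ (t : Ordinal) ∧ ε ≤ dist (x u) (x t) := by
        intro b
        obtain ⟨u, h1, h2, h3⟩ := hw (f b.1 b.2) (hf.lt b.2)
        exact ⟨u, h1, h2, h3⟩
      choose g hg1 hg2 hg3 using hwit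
      set S : Set (Set.Iic (τ * σ)) := insert t (Set.range g) with hSdef
      have hcard : Cardinal.mk ↥S < Cardinal.lift.{1, 0} τ.card := by
        have h1 : Cardinal.mk ↥S ≤ Cardinal.mk ↥(Set.range g) + 1 := Cardinal.mk_insert_le
        have h2 : Cardinal.mk ↥(Set.range g)
            ≤ Cardinal.mk ↥(Set.Iio ((t : Ordinal)).cof.ord) := Cardinal.mk_range_le
        have h3 : Cardinal.mk ↥(Set.Iio ((t : Ordinal)).cof.ord)
            = Cardinal.lift.{1, 0} ((t : Ordinal)).cof.ord.card :=
          Ordinal.mk_Iio_ordinal _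
        have hcc : ((t : Ordinal)).cof < τ.card := by
          have := (Ordinal.IsInitial.card_lt_card hτinit).2 hcof
          rwa [Cardinal.card_ord] at this
        have haleph : Cardinal.aleph0 ≤ Cardinal.lift.{1, 0} τ.card :=
          Cardinal.aleph0_le_lift.2 (Ordinal.aleph0_le_card.2 hω)
        calc Cardinal.mk ↥S ≤ Cardinal.mk ↥(Set.range g) + 1 := h1
          _ ≤ Cardinal.mk ↥(Set.Iio ((t : Ordinal)).cof.ord) + 1 := by
              exact add_le_add_left h2 1
          _ = Cardinal.lift.{1, 0} ((t : Ordinal)).cof.ord.card + 1 := by rw [h3]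
          _ < Cardinal.lift.{1, 0} τ.card := by
              apply Cardinal.add_lt_of_lt haleph
              · rw [Cardinal.card_ord]
                exact Cardinal.lift_lt.2 hcc
              · exact lt_of_lt_of_le Cardinal.one_lt_aleph0 haleph
      obtain ⟨y, hyc, hyS⟩ := h S hcard
      have hyt : y t = x t := hyS t (Set.mem_insert _ _)
      obtain ⟨a, ha, hya⟩ := (continuousAt_iff_Ioc hlim y).1 hyc.continuousAt ε hε
      have hblt : a < Ordinal.blsub ((t : Ordinal)).cof.ord f := by
        rw [hf.blsub_eq]; exact ha
      obtain ⟨i, hi, hfi⟩ := Ordinal.lt_blsub_iff.1 hblt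
      have hyu : y (g ⟨i, hi⟩) = x (g ⟨i, hi⟩) :=
        hyS _ (Set.mem_insert_of_mem _ ⟨⟨i, hi⟩, rfl⟩)
      have hd : dist (y (g ⟨i, hi⟩)) (y t) < ε :=
        hya _ (lt_of_le_of_lt hfi (hg1 ⟨i, hi⟩)) (hg2 ⟨i, hi⟩)
      rw [hyu, hyt] at hd
      exact absurd hd (not_lt.2 (hg3 ⟨i, hi⟩))
    · exact continuousAt_of_not_limit hlim
end

section
/- Let α be an ordinal and f : [0,α] → ℝ. Then the following are equivalent: (i) for every countable subset A of [0,α] there exists a continuous function g : [0,α] → ℝ with g(t) = f(t) for all t ∈ A (i.e. f is strictly ℵ₀-continuous); (ii) f is continuous at every point of countable character of [0,α], i.e. at every limit ordinal t ≤ α with cf(t) = ω. -/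
open Set Filter Topology Ordinal

universe u

section Stmt7Aux
variable {α : Ordinal.{u}}

lemma stmt7_nhds_sub (t : Set.Iic α) : 𝓝 t = Filter.comap Subtype.val (𝓝 (t : Ordinal)) :=
  nhds_induced _ _

lemma stmt7_basis (t : Set.Iic α) (ht : (t : Ordinal) ≠ 0) :
    (𝓝 t).HasBasis (fun s : Ordinal => s < (t : Ordinal))
      (fun s => Subtype.val ⁻¹' Set.Ioc s (t : Ordinal)) := by
  rw [stmt7_nhds_sub]
  exact (SuccOrder.hasBasis_nhds_Ioc_of_exists_lt ⟨0, pos_iff_ne_zero.2 ht⟩).comap _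

/-- forward direction -/
lemma stmt7_fwd (α : Ordinal.{u}) (f : Set.Iic α → ℝ)
    (H : ∀ A : Set (Set.Iic α), A.Countable →
      ∃ g : Set.Iic α → ℝ, Continuous g ∧ ∀ t ∈ A, g t = f t)
    (t : Set.Iic α) (ht : Order.IsSuccLimit (t : Ordinal))
    (hcf : Ordinal.cof (t : Ordinal) = Cardinal.aleph0) : ContinuousAt f t := by
  obtain ⟨ι, f0, hlsub, hcard⟩ := Ordinal.exists_lsub_cof (t : Ordinal)
  rw [hcf, ← Cardinal.mk_denumerable (ULift.{u} ℕ)] at hcard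
  obtain ⟨e⟩ := Cardinal.eq.1 hcard
  set s : ℕ → Ordinal := fun n => f0 (e.symm ⟨n⟩) with hs_def
  have hs : ∀ n, s n < (t : Ordinal) := by
    intro n; rw [← hlsub]; exact Ordinal.lt_lsub _ _
  have hcof : ∀ b < (t : Ordinal), ∃ n, b ≤ s n := by
    intro b hb
    rw [← hlsub, Ordinal.lt_lsub_iff] at hb
    obtain ⟨i, hi⟩ := hb
    exact ⟨(e i).down, by simp only [hs_def]; rwa [show (⟨(e i).down⟩ : ULift ℕ) = e i from rfl, Equiv.symm_apply_apply]⟩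
  set M : ℕ → Ordinal := fun n => (Finset.range (n + 1)).sup s with hM_def
  have hM1 : ∀ n, s n ≤ M n := fun n =>
    Finset.le_sup (Finset.mem_range.2 (Nat.lt_succ_self n))
  have hMmono : Monotone M := fun m n h =>
    Finset.sup_mono (Finset.range_subset_range.2 (by omega))
  have hMlt : ∀ n, M n < (t : Ordinal) := by
    intro n
    refine Finset.sup_lt_iff ?_ |>.2 fun i _ => hs i
    exact ht.pos
  by_contra hcont
  rw [ContinuousAt, (stmt7_basis t ht.pos.ne').tendsto_iff Metric.nhds_basis_ball] at hcont
  push_neg at hcont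
  obtain ⟨ε, hε, hbad⟩ := hcont
  choose x hx1 hx2 using fun n => hbad (M n) (hMlt n)
  obtain ⟨g, hgcont, hgA⟩ := H (Set.range x ∪ {t})
    ((Set.countable_range x).union (Set.countable_singleton t))
  have hgx : ∀ n, g (x n) = f (x n) := fun n => hgA _ (Or.inl ⟨n, rfl⟩)
  have hgt : g t = f t := hgA t (Or.inr rfl)
  have hxt : Tendsto x atTop (𝓝 t) := by
    rw [(stmt7_basis t ht.pos.ne').tendsto_right_iff]
    intro b hb
    obtain ⟨k, hk⟩ := hcof b hb
    filter_upwards [Filter.eventually_ge_atTop k] with n hn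
    have h1 : b ≤ M n := hk.trans ((hM1 k).trans (hMmono hn))
    exact ⟨h1.trans_lt (hx1 n).1, (hx1 n).2⟩
  have htend : Tendsto (fun n => f (x n)) atTop (𝓝 (f t)) := by
    have := (hgcont.tendsto t).comp hxt
    rw [show g t = f t from hgt] at this
    exact this.congr fun n => hgx n
  have := (Metric.tendsto_nhds.mp htend) ε hε
  obtain ⟨n, hn⟩ := this.exists
  exact hx2 n (Metric.mem_ball.2 hn)


lemma stmt7_bwd (α : Ordinal.{u}) (f : Set.Iic α → ℝ)
    (H : ∀ t : Set.Iic α, Order.IsSuccLimit (t : Ordinal) →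
      Ordinal.cof (t : Ordinal) = Cardinal.aleph0 → ContinuousAt f t)
    (A : Set (Set.Iic α)) (hA : A.Countable) :
    ∃ g : Set.Iic α → ℝ, Continuous g ∧ ∀ t ∈ A, g t = f t := by
  classical
  set A' : Set Ordinal := (Subtype.val '' A) ∪ {α} with hA'_def
  have hA'cnt : A'.Countable := (hA.image _).union (Set.countable_singleton _)
  have hA'sub : A' ⊆ Set.Iic α := by
    rintro x (⟨y, _, rfl⟩ | rfl)
    · exact y.2
    · exact Set.self_mem_Iic
  set C : Set Ordinal := closure A' with hC_def
  have hCsub : C ⊆ Set.Iic α := closure_minimal hA'sub isClosed_Iic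
  have hαC : α ∈ C := subset_closure (Or.inr rfl)
  have hne : ∀ x : Set.Iic α, (C ∩ Set.Ici (x : Ordinal)).Nonempty :=
    fun x => ⟨α, hαC, x.2⟩
  set R : Set.Iic α → Set.Iic α :=
    fun x => ⟨sInf (C ∩ Set.Ici (x : Ordinal)), hCsub (csInf_mem (hne x)).1⟩ with hR_def
  have hRC : ∀ x, (R x : Ordinal) ∈ C := fun x => (csInf_mem (hne x)).1
  have hxR : ∀ x : Set.Iic α, (x : Ordinal) ≤ (R x : Ordinal) := fun x => (csInf_mem (hne x)).2
  have hRle : ∀ (x : Set.Iic α) {c : Ordinal}, c ∈ C → (x : Ordinal) ≤ c →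
      (R x : Ordinal) ≤ c := by
    intro x c hc hxc
    exact csInf_le' ⟨hc, hxc⟩
  refine ⟨fun y => f (R y), ?_, fun a ha => ?_⟩
  swap
  · have : R a = a := Subtype.ext (le_antisymm
      (hRle a (subset_closure (Or.inl ⟨a, ha, rfl⟩)) le_rfl) (hxR a))
    show f (R a) = f a
    rw [this]
  · rw [continuous_iff_continuousAt]
    intro x
    by_cases hlim : Order.IsSuccLimit (x : Ordinal)
    · set b := sSup (C ∩ Set.Iio (x : Ordinal)) with hb_def
      have hbA : BddAbove (C ∩ Set.Iio (x : Ordinal)) := ⟨x, fun z hz => hz.2.le⟩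
      have hble : b ≤ (x : Ordinal) := csSup_le' fun c hc => hc.2.le
      by_cases hb : b < (x : Ordinal)
      · -- locally constant
        have key : ∀ y : Set.Iic α, b < (y : Ordinal) → (y : Ordinal) ≤ (x : Ordinal) →
            R y = R x := by
          intro y hy1 hy2
          apply Subtype.ext
          show sInf (C ∩ Set.Ici (y : Ordinal)) = sInf (C ∩ Set.Ici (x : Ordinal))
          congr 1
          ext c
          constructor
          · rintro ⟨hcC, hcy⟩
            refine ⟨hcC, ?_⟩
            by_contra hcx
            have hcx' : c < (x : Ordinal) := not_le.1 hcx
            have hcb : c ≤ b := le_csSup hbA ⟨hcC, hcx'⟩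
            exact absurd hcy (not_le.2 (hcb.trans_lt hy1))
          · rintro ⟨hcC, hcx⟩
            exact ⟨hcC, hy2.trans hcx⟩
        have hS : Subtype.val ⁻¹' Set.Ioc b (x : Ordinal) ∈ 𝓝 x :=
          (stmt7_basis x hlim.pos.ne').mem_of_mem hb
        have heq : (fun y => f (R y)) =ᶠ[𝓝 x] fun _ => f (R x) :=
          Filter.eventually_of_mem hS fun y hy => by
            show f (R y) = f (R x)
            rw [key y hy.1 hy.2]
        exact (continuousAt_const (y := f (R x))).congr heq.symm
      · -- b = x, continuity point
        have hbx : b = (x : Ordinal) := le_antisymm hble (not_lt.1 hb)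
        have hT : ∀ s < (x : Ordinal), ∃ a ∈ A', s < a ∧ a < (x : Ordinal) := by
          intro s hs
          have hs' : s < b := hbx ▸ hs
          have hne2 : (C ∩ Set.Iio (x : Ordinal)).Nonempty := by
            by_contra h
            rw [Set.not_nonempty_iff_eq_empty] at h
            rw [hb_def, h, csSup_empty] at hs'
            simp at hs'
          obtain ⟨c, ⟨hcC, hcx⟩, hsc⟩ := exists_lt_of_lt_csSup hne2 hs'
          have hcA : c ∈ closure A' := hcC
          rw [mem_closure_iff] at hcA
          obtain ⟨a, ⟨hsa, hasucc⟩, haA'⟩ :=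
            hcA (Set.Ioo s (Order.succ c)) isOpen_Ioo ⟨hsc, Order.lt_succ c⟩
          exact ⟨a, haA', hsa, (Order.lt_succ_iff.1 hasucc).trans_lt hcx⟩
        set T : Set Ordinal := A' ∩ Set.Iio (x : Ordinal) with hT_def
        have hTne : T.Nonempty := by
          obtain ⟨a, ha1, ha2, ha3⟩ := hT 0 hlim.pos
          exact ⟨a, ha1, ha3⟩
        obtain ⟨h0, hh0⟩ := Set.Countable.exists_eq_range
          (hA'cnt.mono Set.inter_subset_left) hTne
        set e : ULift.{u} ℕ → Ordinal := fun n => h0 n.down with he_def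
        have heT : ∀ i, e i ∈ T := fun i => by
          rw [hT_def, hh0]; exact ⟨i.down, rfl⟩
        have hbdd : BddAbove (Set.range e) := ⟨x, by rintro _ ⟨i, rfl⟩; exact (heT i).2.le⟩
        have hsup : ⨆ i, e i = (x : Ordinal) := by
          apply le_antisymm
          · exact ciSup_le fun i => (heT i).2.le
          · refine le_of_forall_lt fun s hs => ?_
            obtain ⟨a, ha1, ha2, ha3⟩ := hT s hs
            have : a ∈ T := ⟨ha1, ha3⟩
            rw [hT_def, hh0] at this
            obtain ⟨n, hn⟩ := this
            calc s < a := ha2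
              _ = e ⟨n⟩ := hn.symm
              _ ≤ ⨆ i, e i := le_ciSup hbdd _
        have hcof : Ordinal.cof (x : Ordinal) = Cardinal.aleph0 := by
          apply le_antisymm
          · have h1 : ∀ i, e i < ⨆ i, e i := fun i => hsup ▸ (heT i).2
            have := Ordinal.cof_iSup_le h1
            rw [hsup, Cardinal.mk_denumerable] at this
            exact this
          · exact Ordinal.aleph0_le_cof.2 hlim
        have hxC : (x : Ordinal) ∈ C :=
          Ordinal.mem_closure_iff_iSup.2 ⟨ULift ℕ, inferInstance, e,
            fun i => (heT i).1, hsup⟩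
        have hRx : R x = x := Subtype.ext (le_antisymm (hRle x hxC le_rfl) (hxR x))
        have hfx : ContinuousAt f x := H x hlim hcof
        have hIic : Subtype.val ⁻¹' Set.Iic (x : Ordinal) ∈ 𝓝 x := by
          rw [stmt7_nhds_sub]
          apply Filter.preimage_mem_comap
          rw [← SuccOrder.nhdsLE_eq_nhds]
          exact self_mem_nhdsWithin
        have hRtend : Tendsto R (𝓝 x) (𝓝 x) := by
          refine tendsto_of_tendsto_of_tendsto_of_le_of_le' tendsto_id tendsto_const_nhds
            (Filter.Eventually.of_forall fun y => ?_) ?_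
          · exact Subtype.coe_le_coe.1 (hxR y)
          · filter_upwards [hIic] with y hy
            exact Subtype.coe_le_coe.1 (hRle y hxC hy)
        have htend : Tendsto (f ∘ R) (𝓝 x) (𝓝 (f x)) := Filter.Tendsto.comp hfx hRtend
        show Tendsto (fun y => f (R y)) (𝓝 x) (𝓝 (f (R x)))
        rw [hRx]
        exact htend
    · -- isolated point
      have hpure : 𝓝 x = pure x := by
        rw [stmt7_nhds_sub, Ordinal.nhds_eq_pure.2 hlim, Filter.comap_pure]
        have : Subtype.val ⁻¹' ({(x : Ordinal)} : Set Ordinal) = {x} := by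
          ext y
          simp [Subtype.ext_iff]
        rw [this, Filter.principal_singleton]
      rw [ContinuousAt, hpure]
      exact tendsto_pure_nhds _ x

end Stmt7Aux

/-- A function `f : [0,α] → ℝ` is strictly `ℵ₀`-continuous (for every countable
`A ⊆ [0,α]` there is a continuous `g : [0,α] → ℝ` agreeing with `f` on `A`) iff `f`
is continuous at every point of countable character of `[0,α]`, i.e. at every limit
ordinal `t ≤ α` with `cf(t) = ω`. -/
theorem stmt7 (α : Ordinal) (f : Set.Iic α → ℝ) :
    (∀ A : Set (Set.Iic α), A.Countable →
      ∃ g : Set.Iic α → ℝ, Continuous g ∧ ∀ t ∈ A, g t = f t) ↔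
    (∀ t : Set.Iic α, Order.IsSuccLimit (t : Ordinal) →
      Ordinal.cof (t : Ordinal) = Cardinal.aleph0 → ContinuousAt f t) := by
  constructor
  · exact stmt7_fwd α f
  · exact stmt7_bwd α f
end

section
/- Let τ ≥ ω₁ be a regular initial ordinal and let σ ≤ τ be an initial ordinal. Then there exists a topological embedding f : c₀(Γ_σ) → M_{τσ} such that f(0) = 0 and f(x) ∈ M_{τσ} \ C_p([0, τ·σ]) whenever x ≠ 0 (i.e. f(x) fails to be continuous for every nonzero x). -/
/-- `c₀(Γ_σ)`: the functions on the discrete set `Γ_σ` of ordinals `< σ` such that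
`{t : |x t| ≥ ε}` is finite for every `ε > 0`; as a subtype it carries the topology
of pointwise convergence inherited from `ℝ^{Γ_σ}`. -/
def c0Set (σ : Ordinal) : Set (Set.Iio σ → ℝ) :=
  {x | ∀ ε : ℝ, 0 < ε → {t : Set.Iio σ | ε ≤ |x t|}.Finite}

open Ordinal Set Topology Filter

/-- The embedding map: at a "peak" point `τ·(s+1)` the value is `x s`, elsewhere `0`. -/
noncomputable def embFun (τ σ : Ordinal) (x : Set.Iio σ → ℝ) (t : Set.Iic (τ * σ)) : ℝ :=
  letI := Classical.propDecidable (∃ s : Set.Iio σ, (t : Ordinal) = τ * (s.val + 1))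
  if h : ∃ s : Set.Iio σ, (t : Ordinal) = τ * (s.val + 1) then x h.choose else 0

lemma embFun_of_not {τ σ : Ordinal} {x : Set.Iio σ → ℝ} {t : Set.Iic (τ * σ)}
    (h : ¬ ∃ s : Set.Iio σ, (t : Ordinal) = τ * (s.val + 1)) : embFun τ σ x t = 0 := by
  unfold embFun; exact dif_neg h

lemma embFun_of_ex {τ σ : Ordinal} {x : Set.Iio σ → ℝ} {t : Set.Iic (τ * σ)}
    (h : ∃ s : Set.Iio σ, (t : Ordinal) = τ * (s.val + 1)) : embFun τ σ x t = x h.choose := by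
  unfold embFun
  rw [dif_pos h]

lemma peak_inj {τ σ : Ordinal} (hτ0 : 0 < τ) {a b : Set.Iio σ}
    (h : τ * (a.val + 1) = τ * (b.val + 1)) : a = b := by
  have h1 : a.val + 1 = b.val + 1 :=
    le_antisymm ((mul_le_mul_iff_of_pos_left hτ0).1 h.le)
      ((mul_le_mul_iff_of_pos_left hτ0).1 h.ge)
  refine Subtype.ext ?_
  rw [Ordinal.add_one_eq_succ, Ordinal.add_one_eq_succ] at h1
  exact Order.succ_injective h1

lemma embFun_peak {τ σ : Ordinal} (hτ0 : 0 < τ) (x : Set.Iio σ → ℝ) (s : Set.Iio σ)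
    (hle : τ * (s.val + 1) ≤ τ * σ) :
    embFun τ σ x ⟨τ * (s.val + 1), hle⟩ = x s := by
  have hex : ∃ s' : Set.Iio σ,
      ((⟨τ * (s.val + 1), hle⟩ : Set.Iic (τ * σ)) : Ordinal) = τ * (s'.val + 1) := ⟨s, rfl⟩
  rw [embFun_of_ex hex]
  exact (congrArg x (peak_inj hτ0 hex.choose_spec)).symm

/-- Let `τ ≥ ω₁` be a regular initial ordinal and `σ ≤ τ` an initial ordinal. Then
there is a topological embedding `f : c₀(Γ_σ) → M_{τσ}` with `f 0 = 0` and such that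
`f x ∈ M_{τσ} \ C_p([0, τ·σ])` (i.e. `f x` is discontinuous) for every `x ≠ 0`. -/
theorem stmt8 (τ σ : Ordinal) (hreg : IsRegularOrdinal τ) (hτinit : τ.IsInitial)
    (hτ : (Cardinal.aleph 1).ord ≤ τ) (hσ : σ.IsInitial) (hστ : σ ≤ τ) :
    ∃ f : ↥(c0Set σ) → (Set.Iic (τ * σ) → ℝ),
      Topology.IsEmbedding f ∧ (∀ x, f x ∈ MSet τ σ) ∧
      (∀ x : ↥(c0Set σ), (x : Set.Iio σ → ℝ) = 0 → f x = 0) ∧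
      (∀ x : ↥(c0Set σ), (x : Set.Iio σ → ℝ) ≠ 0 → ¬ Continuous (f x)) := by
  classical
  -- basic facts about τ
  have hω : (Cardinal.aleph0).ord ≤ τ := by
    refine le_trans ?_ hτ
    exact Cardinal.ord_le_ord.2 (by simpa using Cardinal.aleph0_le_aleph 1)
  have hτlim : Order.IsSuccLimit τ := by
    have hcof : Cardinal.aleph0 ≤ τ.cof := by
      rw [← Cardinal.ord_le_ord, hreg]; exact hω
    have := Cardinal.isSuccLimit_ord hcof
    rwa [hreg] at this
  have hτ0 : (0 : Ordinal) < τ := hτlim.pos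
  -- the peaks are inside [0, τσ]
  have hpeakle : ∀ s : Set.Iio σ, τ * (s.val + 1) ≤ τ * σ := by
    intro s
    have h1 : s.val + 1 ≤ σ := by
      rw [Ordinal.add_one_eq_succ]; exact Order.succ_le_of_lt s.2
    exact mul_le_mul_right h1 τ
  -- peaks have cofinality τ
  have hpeakcof : ∀ s : Set.Iio σ, (τ * (s.val + 1)).cof.ord = τ := by
    intro s
    rw [mul_add_one, Ordinal.cof_add _ hτ0.ne', hreg]
  -- core continuity lemma at non-peak points
  have hcont : ∀ (x : ↥(c0Set σ)) (t : Set.Iic (τ * σ)),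
      (¬ ∃ s : Set.Iio σ, (t : Ordinal) = τ * (s.val + 1)) →
      ContinuousAt (embFun τ σ x.val) t := by
    intro x t ht
    have hft : embFun τ σ x.val t = 0 := embFun_of_not ht
    rw [ContinuousAt, hft, NormedAddCommGroup.tendsto_nhds_zero]
    intro ε hε
    have hfin := x.2 ε hε
    by_cases ht0 : (t : Ordinal) = 0
    · have hU : {u : Set.Iic (τ * σ) | (u : Ordinal) < 1} ∈ 𝓝 t := by
        have hopen : IsOpen {u : Set.Iic (τ * σ) | (u : Ordinal) < 1} :=
          (isOpen_Iio (a := (1 : Ordinal))).preimage continuous_subtype_val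
        exact hopen.mem_nhds (by simp [ht0])
      filter_upwards [hU] with u hu
      have hu0 : (u : Ordinal) = 0 := Ordinal.lt_one_iff_zero.1 hu
      have hz : embFun τ σ x.val u = 0 := by
        apply embFun_of_not
        rintro ⟨s, hs⟩
        have hpos : (0 : Ordinal) < τ * (s.val + 1) :=
          mul_pos hτ0 (lt_of_lt_of_le zero_lt_one (le_add_left (le_refl (1 : Ordinal))))
        rw [hu0] at hs
        exact hpos.ne' hs.symm
      simpa [hz] using hε
    · set Q : Finset Ordinal :=
        (hfin.toFinset.image (fun s => τ * (s.val + 1))).filter (· < (t : Ordinal)) with hQ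
      have hat : Q.sup id < (t : Ordinal) := by
        refine (Finset.sup_lt_iff (pos_iff_ne_zero.2 ht0)).2 ?_
        intro b hb
        exact (Finset.mem_filter.1 hb).2
      have hU : {u : Set.Iic (τ * σ) |
          Q.sup id < (u : Ordinal) ∧ (u : Ordinal) < (t : Ordinal) + 1} ∈ 𝓝 t := by
        have hopen : IsOpen {u : Set.Iic (τ * σ) |
            Q.sup id < (u : Ordinal) ∧ (u : Ordinal) < (t : Ordinal) + 1} :=
          (isOpen_Ioo (a := Q.sup id) (b := (t : Ordinal) + 1)).preimage continuous_subtype_val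
        exact hopen.mem_nhds ⟨hat, lt_add_one _⟩
      filter_upwards [hU] with u hu
      obtain ⟨hau, hut⟩ := hu
      have hut' : (u : Ordinal) ≤ (t : Ordinal) := Order.lt_add_one_iff.1 hut
      by_cases hp : ∃ s : Set.Iio σ, (u : Ordinal) = τ * (s.val + 1)
      · rw [embFun_of_ex hp, Real.norm_eq_abs]
        by_contra hge
        push_neg at hge
        have hmem : hp.choose ∈ hfin.toFinset := hfin.mem_toFinset.2 hge
        have hult : (u : Ordinal) < (t : Ordinal) := by
          rcases lt_or_eq_of_le hut' with h | h
          · exact h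
          · exact absurd ⟨hp.choose, by rw [← h]; exact hp.choose_spec⟩ ht
        have huQ : (u : Ordinal) ∈ Q :=
          Finset.mem_filter.2 ⟨Finset.mem_image.2 ⟨hp.choose, hmem, hp.choose_spec.symm⟩, hult⟩
        exact absurd (Finset.le_sup (f := id) huQ) (not_le.2 hau)
      · rw [embFun_of_not hp]
        simpa using hε
  refine ⟨fun x => embFun τ σ x.val, ?_, ?_, ?_, ?_⟩
  · -- embedding
    set g : (Set.Iic (τ * σ) → ℝ) → (Set.Iio σ → ℝ) :=
      fun y s => y ⟨τ * (s.val + 1), hpeakle s⟩ with hg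
    have hgf : (g ∘ fun x : ↥(c0Set σ) => embFun τ σ x.val) = Subtype.val := by
      funext x s
      exact embFun_peak hτ0 x.val s (hpeakle s)
    have hfc : Continuous (fun x : ↥(c0Set σ) => embFun τ σ x.val) := by
      refine continuous_pi fun t => ?_
      by_cases h : ∃ s : Set.Iio σ, (t : Ordinal) = τ * (s.val + 1)
      · have : (fun x : ↥(c0Set σ) => embFun τ σ x.val t) = fun x => x.val h.choose := by
          funext y; exact embFun_of_ex h
        rw [this]
        exact (continuous_apply h.choose).comp continuous_subtype_val
      · have : (fun x : ↥(c0Set σ) => embFun τ σ x.val t) = fun _ => 0 := by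
          funext y; exact embFun_of_not h
        rw [this]
        exact continuous_const
    have hgc : Continuous g := continuous_pi fun s => continuous_apply _
    exact Topology.IsEmbedding.of_comp hfc hgc (by rw [hgf]; exact Topology.IsEmbedding.subtypeVal)
  · -- membership in MSet
    intro x t htcof
    refine hcont x t ?_
    rintro ⟨s, hs⟩
    have hc := hpeakcof s
    rw [← hs] at hc
    rw [hc] at htcof
    exact lt_irrefl _ htcof
  · -- zero to zero
    intro x hx
    funext t
    show embFun τ σ x.val t = 0
    by_cases h : ∃ s : Set.Iio σ, (t : Ordinal) = τ * (s.val + 1)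
    · rw [embFun_of_ex h, hx]; rfl
    · exact embFun_of_not h
  · -- discontinuity for nonzero x
    intro x hx hcontf
    obtain ⟨s, hs⟩ : ∃ s, x.val s ≠ 0 := by
      by_contra h
      push_neg at h
      exact hx (funext h)
    have hple : τ * (s.val + 1) ≤ τ * σ := hpeakle s
    have hplim : Order.IsSuccLimit (τ * (s.val + 1)) := by
      rw [mul_add_one]
      exact Ordinal.isSuccLimit_add _ hτlim
    have hlow : τ * s.val < τ * (s.val + 1) :=
      (mul_lt_mul_iff_of_pos_left hτ0).2 (lt_add_one _)
    set S : Set (Set.Iic (τ * σ)) :=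
      {u | τ * s.val < (u : Ordinal) ∧ (u : Ordinal) < τ * (s.val + 1)} with hSdef
    have hSzero : ∀ u ∈ S, embFun τ σ x.val u = 0 := by
      rintro u ⟨h1, h2⟩
      apply embFun_of_not
      rintro ⟨s', hs'⟩
      rw [hs'] at h1 h2
      have hlt : s'.val < s.val := by
        have := (mul_lt_mul_iff_of_pos_left hτ0).1 h2
        rw [Ordinal.add_one_eq_succ, Ordinal.add_one_eq_succ] at this
        exact Order.succ_lt_succ_iff.1 this
      have hle : s'.val + 1 ≤ s.val := by
        rw [Ordinal.add_one_eq_succ]; exact Order.succ_le_of_lt hlt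
      exact absurd h1 (not_lt.2 ((mul_le_mul_iff_of_pos_left hτ0).2 hle))
    have hne : (𝓝[S] (⟨τ * (s.val + 1), hple⟩ : Set.Iic (τ * σ))).NeBot := by
      rw [← mem_closure_iff_nhdsWithin_neBot, mem_closure_iff_nhds]
      intro T hT
      obtain ⟨T', hT', hsub⟩ := (mem_nhds_subtype _ _ _).1 hT
      obtain ⟨b, hb, hIoc⟩ := exists_Ioc_subset_of_mem_nhds hT' ⟨0, hplim.pos⟩
      have hub : max b (τ * s.val) < τ * (s.val + 1) := max_lt hb hlow
      have hup : max b (τ * s.val) + 1 < τ * (s.val + 1) := by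
        rw [Ordinal.add_one_eq_succ]
        exact hplim.succ_lt hub
      refine ⟨⟨max b (τ * s.val) + 1, hup.le.trans hple⟩, hsub (hIoc ⟨?_, hup.le⟩), ?_, hup⟩
      · exact lt_of_le_of_lt (le_max_left _ _) (lt_add_one _)
      · exact lt_of_le_of_lt (le_max_right _ _) (lt_add_one _)
    have h1 : Tendsto (embFun τ σ x.val)
        (𝓝[S] (⟨τ * (s.val + 1), hple⟩ : Set.Iic (τ * σ))) (𝓝 (x.val s)) := by
      have hca : Tendsto (embFun τ σ x.val) (𝓝 (⟨τ * (s.val + 1), hple⟩ : Set.Iic (τ * σ)))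
          (𝓝 (embFun τ σ x.val (⟨τ * (s.val + 1), hple⟩ : Set.Iic (τ * σ)))) :=
        hcontf.continuousAt
      rw [embFun_peak hτ0 x.val s hple] at hca
      exact hca.mono_left nhdsWithin_le_nhds
    have h0 : Tendsto (embFun τ σ x.val)
        (𝓝[S] (⟨τ * (s.val + 1), hple⟩ : Set.Iic (τ * σ))) (𝓝 0) := by
      refine tendsto_const_nhds.congr' ?_
      filter_upwards [self_mem_nhdsWithin] with u hu
      exact (hSzero u hu).symm
    exact hs (tendsto_nhds_unique h1 h0)
end
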